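/- For every integer n ≥ 3, there exists a family C of 3-faces of the n-cube Q_n such that every 2-face of Q_n is contained in exactly one member of C (i.e., the 2-skeleton of Q_n is factored by boundaries of 3-cubes) if and only if n ≡ 1 (mod 6) or n ≡ 3 (mod 6) — that is, exactly when a Steiner triple system on n points exists. -/

import Mathlib

/-- A `d`-face of the `n`-cube: a function `Fin n → Option Bool` with exactly `d`
coordinates equal to `none` (the free coordinates). -/
def IsCubeFace (n d : ℕ) (f : Fin n → Option Bool) : Prop :=
  (Finset.univ.filter fun i => f i = none).card = d

/-- A face `f` is contained in a face `g` iff every coordinate fixed by `g` is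
fixed to the same value by `f`. -/
def FaceContained {n : ℕ} (f g : Fin n → Option Bool) : Prop :=
  ∀ (i : Fin n) (b : Bool), g i = some b → f i = some b


open Finset

def IsSTS {α : Type*} [DecidableEq α] (S : Finset (Finset α)) : Prop :=
  (∀ T ∈ S, T.card = 3) ∧ ∀ a b : α, a ≠ b → ∃! T, T ∈ S ∧ a ∈ T ∧ b ∈ T

theorem sts_transport {α β : Type*} [DecidableEq α] [DecidableEq β] (e : α ≃ β)
    (h : ∃ S : Finset (Finset α), IsSTS S) : ∃ S : Finset (Finset β), IsSTS S := by
  obtain ⟨S, hcard, hpair⟩ := h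
  refine ⟨S.image (Finset.image e), ?_, ?_⟩
  · intro T hT
    simp only [Finset.mem_image] at hT
    obtain ⟨T', hT', rfl⟩ := hT
    rw [Finset.card_image_of_injective _ e.injective]
    exact hcard T' hT'
  · intro a b hab
    obtain ⟨T, ⟨hTS, haT, hbT⟩, huniq⟩ := hpair (e.symm a) (e.symm b)
      (fun h => hab (e.symm.injective h))
    refine ⟨T.image e, ⟨Finset.mem_image_of_mem _ hTS, ?_, ?_⟩, ?_⟩
    · simpa using Finset.mem_image_of_mem e haT
    · simpa using Finset.mem_image_of_mem e hbT
    · rintro U ⟨hUS, haU, hbU⟩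
      simp only [Finset.mem_image] at hUS
      obtain ⟨U', hU', rfl⟩ := hUS
      have ha' : e.symm a ∈ U' := by
        obtain ⟨x, hx, hxe⟩ := Finset.mem_image.mp haU
        rwa [show e.symm a = x by simp [← hxe]]
      have hb' : e.symm b ∈ U' := by
        obtain ⟨x, hx, hxe⟩ := Finset.mem_image.mp hbU
        rwa [show e.symm b = x by simp [← hxe]]
      rw [huniq U' ⟨hU', ha', hb'⟩]

theorem sts_mod (n : ℕ) (hn : 1 ≤ n) (h : ∃ S : Finset (Finset (Fin n)), IsSTS S) :
    n % 6 = 1 ∨ n % 6 = 3 := by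
  obtain ⟨S, hcard, hpair⟩ := h
  -- count pairs through a fixed point i
  have key1 : 2 ∣ n - 1 := by
    have i : Fin n := ⟨0, hn⟩
    set Si := S.filter (fun T => i ∈ T) with hSi
    have hdisj : (Si : Set (Finset (Fin n))).PairwiseDisjoint (fun T => T.erase i) := by
      intro T1 h1 T2 h2 hne
      simp only [Finset.mem_coe, hSi, Finset.mem_filter] at h1 h2
      refine Finset.disjoint_left.mpr fun j hj1 hj2 => ?_
      have hji : j ≠ i := Finset.ne_of_mem_erase hj1
      obtain ⟨T, _, huniq⟩ := hpair i j (Ne.symm hji)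
      exact hne ((huniq T1 ⟨h1.1, h1.2, Finset.mem_of_mem_erase hj1⟩).trans
        (huniq T2 ⟨h2.1, h2.2, Finset.mem_of_mem_erase hj2⟩).symm)
    have hcover : Si.biUnion (fun T => T.erase i) = Finset.univ.erase i := by
      ext j
      simp only [Finset.mem_biUnion, Finset.mem_erase, Finset.mem_univ, and_true, hSi,
        Finset.mem_filter]
      constructor
      · rintro ⟨T, ⟨_, _⟩, hj⟩
        exact hj.1
      · intro hji
        obtain ⟨T, ⟨hTS, hiT, hjT⟩, _⟩ := hpair i j (Ne.symm hji)
        exact ⟨T, ⟨hTS, hiT⟩, ⟨hji, hjT⟩⟩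
    have hc : (Finset.univ.erase i).card = ∑ T ∈ Si, (T.erase i).card := by
      rw [← hcover, Finset.card_biUnion ?_]
      · intro T1 h1 T2 h2 hne
        exact hdisj (Finset.mem_coe.mpr h1) (Finset.mem_coe.mpr h2) hne
    have hec : ∀ T ∈ Si, (T.erase i).card = 2 := by
      intro T hT
      simp only [hSi, Finset.mem_filter] at hT
      rw [Finset.card_erase_of_mem hT.2, hcard T hT.1]
    rw [Finset.sum_congr rfl hec, Finset.sum_const, smul_eq_mul] at hc
    rw [Finset.card_erase_of_mem (Finset.mem_univ i), Finset.card_univ, Fintype.card_fin] at hc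
    exact ⟨Si.card, by omega⟩
  have key2 : 3 ∣ n * (n - 1) := by
    have hdisj : ∀ T1 ∈ S, ∀ T2 ∈ S, T1 ≠ T2 →
        Disjoint (T1.powersetCard 2) (T2.powersetCard 2) := by
      intro T1 h1 T2 h2 hne
      refine Finset.disjoint_left.mpr fun p hp1 hp2 => ?_
      rw [Finset.mem_powersetCard] at hp1 hp2
      obtain ⟨a, b, hab, rfl⟩ := Finset.card_eq_two.mp hp1.2
      have ha1 : a ∈ T1 := hp1.1 (by simp)
      have hb1 : b ∈ T1 := hp1.1 (by simp)
      have ha2 : a ∈ T2 := hp2.1 (by simp)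
      have hb2 : b ∈ T2 := hp2.1 (by simp)
      obtain ⟨T, _, huniq⟩ := hpair a b hab
      exact hne ((huniq T1 ⟨h1, ha1, hb1⟩).trans (huniq T2 ⟨h2, ha2, hb2⟩).symm)
    have hcover : S.biUnion (fun T => T.powersetCard 2) = Finset.univ.powersetCard 2 := by
      ext p
      simp only [Finset.mem_biUnion, Finset.mem_powersetCard]
      constructor
      · rintro ⟨T, _, _, hc2⟩
        exact ⟨Finset.subset_univ p, hc2⟩
      · rintro ⟨-, hc2⟩
        obtain ⟨a, b, hab, rfl⟩ := Finset.card_eq_two.mp hc2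
        obtain ⟨T, ⟨hTS, haT, hbT⟩, -⟩ := hpair a b hab
        exact ⟨T, hTS, by intro x hx; simp at hx; rcases hx with rfl | rfl <;> assumption, hc2⟩
    have hc : (Finset.univ.powersetCard 2 : Finset (Finset (Fin n))).card
        = ∑ T ∈ S, (T.powersetCard 2).card := by
      rw [← hcover, Finset.card_biUnion hdisj]
    have hec : ∀ T ∈ S, (T.powersetCard 2).card = 3 := by
      intro T hT
      rw [Finset.card_powersetCard, hcard T hT]; rfl
    rw [Finset.sum_congr rfl hec, Finset.sum_const, smul_eq_mul,
      Finset.card_powersetCard, Finset.card_univ, Fintype.card_fin] at hc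
    have := Nat.choose_two_right n
    have h2 : 2 * n.choose 2 = n * (n - 1) := by
      rw [this]
      exact Nat.mul_div_cancel' (Nat.even_mul_pred_self n).two_dvd
    exact ⟨2 * S.card, by omega⟩
  rcases (Nat.Prime.dvd_mul (by norm_num)).mp key2 with h3 | h3 <;> omega


/-- The face with free coordinates `T` and fixed values `w`. -/
def cubeFace {n : ℕ} (T : Finset (Fin n)) (w : Fin n → Bool) : Fin n → Option Bool :=
  fun i => if i ∈ T then none else some (w i)

lemma cubeFace_free {n : ℕ} (T : Finset (Fin n)) (w : Fin n → Bool) :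
    (Finset.univ.filter fun i => cubeFace T w i = none) = T := by
  ext i
  simp only [Finset.mem_filter, Finset.mem_univ, true_and, cubeFace]
  by_cases hi : i ∈ T <;> simp [hi]

/-- Backward reduction: an STS on `Fin n` gives a factorization. -/
theorem sts_to_fact {n : ℕ} (S : Finset (Finset (Fin n))) (hS : IsSTS S) :
    (∃ C : Finset (Fin n → Option Bool),
      (∀ g ∈ C, IsCubeFace n 3 g) ∧
      ∀ f : Fin n → Option Bool, IsCubeFace n 2 f → ∃! g, g ∈ C ∧ FaceContained f g) := by
  obtain ⟨hcard, hpair⟩ := hS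
  refine ⟨(S ×ˢ (Finset.univ : Finset (Fin n → Bool))).image (fun p => cubeFace p.1 p.2), ?_, ?_⟩
  · intro g hg
    simp only [Finset.mem_image, Finset.mem_product] at hg
    obtain ⟨⟨T, w⟩, ⟨hT, -⟩, rfl⟩ := hg
    unfold IsCubeFace
    rw [cubeFace_free]
    exact hcard T hT
  · intro f hf
    obtain ⟨a, b, hab, hP⟩ := Finset.card_eq_two.mp hf
    have hfa : f a = none := by
      have : a ∈ Finset.univ.filter fun i => f i = none := by rw [hP]; simp
      simpa using this
    have hfb : f b = none := by
      have : b ∈ Finset.univ.filter fun i => f i = none := by rw [hP]; simp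
      simpa using this
    have hfree : ∀ i : Fin n, f i = none ↔ (i = a ∨ i = b) := by
      intro i
      constructor
      · intro h
        have : i ∈ Finset.univ.filter fun i => f i = none := by simp [h]
        rw [hP] at this; simpa using this
      · rintro (rfl | rfl) <;> assumption
    obtain ⟨T, ⟨hTS, haT, hbT⟩, huniq⟩ := hpair a b hab
    set w : Fin n → Bool := fun i => (f i).getD false with hw
    have hcont : ∀ i : Fin n, i ∉ T → f i = some (w i) := by
      intro i hiT
      have : f i ≠ none := fun h => by
        rcases (hfree i).mp h with rfl | rfl <;> exact hiT (by assumption)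
      cases hfi : f i with
      | none => exact absurd hfi this
      | some c => simp [hw, hfi]
    refine ⟨cubeFace T w, ⟨?_, ?_⟩, ?_⟩
    · exact Finset.mem_image.mpr ⟨(T, w), by simp [hTS], rfl⟩
    · intro i c hc
      simp only [cubeFace] at hc
      by_cases hiT : i ∈ T
      · simp [hiT] at hc
      · simp only [hiT, if_false, Option.some.injEq] at hc
        rw [hcont i hiT, hc]
    · rintro g' ⟨hg'C, hg'cont⟩
      simp only [Finset.mem_image, Finset.mem_product] at hg'C
      obtain ⟨⟨T', w'⟩, ⟨hT'S, -⟩, rfl⟩ := hg'C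
      have hsub : T' = T := by
        refine huniq T' ⟨hT'S, ?_, ?_⟩
        · by_contra haT'
          have := hg'cont a (w' a) (by simp [cubeFace, haT'])
          rw [hfa] at this; exact (Option.some_ne_none _ this.symm).elim
        · by_contra hbT'
          have := hg'cont b (w' b) (by simp [cubeFace, hbT'])
          rw [hfb] at this; exact (Option.some_ne_none _ this.symm).elim
      rw [hsub] at hg'cont ⊢
      funext i
      by_cases hiT : i ∈ T
      · simp [cubeFace, hiT]
      · have h1 := hg'cont i (w' i) (by simp [cubeFace, hiT])
        rw [hcont i hiT] at h1
        simp only [cubeFace, hiT, if_false, Option.some.injEq] at h1 ⊢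
        exact h1.symm

/-- Forward reduction: a factorization gives an STS on `Fin n`. -/
theorem fact_to_sts {n : ℕ}
    (h : ∃ C : Finset (Fin n → Option Bool),
      (∀ g ∈ C, IsCubeFace n 3 g) ∧
      ∀ f : Fin n → Option Bool, IsCubeFace n 2 f → ∃! g, g ∈ C ∧ FaceContained f g) :
    ∃ S : Finset (Finset (Fin n)), IsSTS S := by
  classical
  obtain ⟨C, hC3, hCf⟩ := h
  set P : (Fin n → Option Bool) → Prop := fun g => ∀ i, g i = none ∨ g i = some false with hPdef
  refine ⟨(C.filter P).image (fun g => Finset.univ.filter fun i => g i = none), ?_, ?_⟩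
  · intro T hT
    simp only [Finset.mem_image, Finset.mem_filter] at hT
    obtain ⟨g, ⟨hgC, -⟩, rfl⟩ := hT
    exact hC3 g hgC
  · intro a b hab
    set f : Fin n → Option Bool := fun i => if i = a ∨ i = b then none else some false with hfdef
    have hf2 : IsCubeFace n 2 f := by
      unfold IsCubeFace
      have : (Finset.univ.filter fun i => f i = none) = {a, b} := by
        ext i
        simp only [Finset.mem_filter, Finset.mem_univ, true_and, hfdef,
          Finset.mem_insert, Finset.mem_singleton]
        by_cases hi : i = a ∨ i = b <;> simp [hi]
      rw [this, Finset.card_insert_of_notMem (by simpa using hab), Finset.card_singleton]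
    obtain ⟨g, ⟨hgC, hgcont⟩, huniq⟩ := hCf f hf2
    have hgP : P g := by
      intro i
      cases hgi : g i with
      | none => exact Or.inl rfl
      | some c =>
        right
        have := hgcont i c hgi
        simp only [hfdef] at this
        by_cases hi : i = a ∨ i = b
        · simp [hi] at this
        · simp only [hi, if_false, Option.some.injEq] at this
          rw [← this]
    have hag : g a = none := by
      rcases hgP a with h | h
      · exact h
      · have := hgcont a false h
        simp [hfdef] at this
    have hbg : g b = none := by
      rcases hgP b with h | h
      · exact h
      · have := hgcont b false h
        simp [hfdef] at this
    refine ⟨Finset.univ.filter fun i => g i = none, ⟨?_, by simp [hag], by simp [hbg]⟩, ?_⟩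
    · exact Finset.mem_image.mpr ⟨g, Finset.mem_filter.mpr ⟨hgC, hgP⟩, rfl⟩
    · rintro T' ⟨hT'S, haT', hbT'⟩
      simp only [Finset.mem_image, Finset.mem_filter] at hT'S
      obtain ⟨g', ⟨hg'C, hg'P⟩, rfl⟩ := hT'S
      simp only [Finset.mem_filter, Finset.mem_univ, true_and] at haT' hbT'
      have : g' = g := by
        refine huniq g' ⟨hg'C, ?_⟩
        intro i c hic
        have hiT' : ¬(i = a ∨ i = b) := by
          rintro (rfl | rfl) <;> simp_all
        have hc : c = false := by
          rcases hg'P i with h | h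
          · rw [h] at hic; exact (Option.some_ne_none _ hic.symm).elim
          · rw [h] at hic; exact (Option.some.injEq _ _ ▸ hic.symm)
        simp [hfdef, hiT', hc]
      rw [this]

section Bose
variable (k : ℕ)

def boseC : ZMod (2*k+1) := ((k+1 : ℕ) : ZMod (2*k+1))

lemma boseC_spec : 2 * boseC k = 1 := by
  have : ((2*(k+1) : ℕ) : ZMod (2*k+1)) = ((2*k+1 : ℕ) : ZMod (2*k+1)) + 1 := by
    push_cast; ring
  rw [ZMod.natCast_self] at this
  unfold boseC
  push_cast at this ⊢
  linear_combination this

def boseTA (x : ZMod (2*k+1)) : Finset (ZMod (2*k+1) × ZMod 3) := {(x,0),(x,1),(x,2)}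

def boseTB (x y : ZMod (2*k+1)) (i : ZMod 3) : Finset (ZMod (2*k+1) × ZMod 3) :=
  {(x,i),(y,i),(boseC k * (x+y), i+1)}

lemma mem_boseTA (p1 : ZMod (2*k+1)) (p2 : ZMod 3) (z : ZMod (2*k+1)) :
    (p1, p2) ∈ boseTA k z ↔ p1 = z := by
  have h3 : ∀ j : ZMod 3, j = 0 ∨ j = 1 ∨ j = 2 := by decide
  simp only [boseTA, Finset.mem_insert, Finset.mem_singleton, Prod.mk.injEq]
  constructor
  · rintro (⟨rfl, -⟩ | ⟨rfl, -⟩ | ⟨rfl, -⟩) <;> rfl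
  · rintro rfl
    rcases h3 p2 with rfl | rfl | rfl <;> simp

lemma mem_boseTB (p1 : ZMod (2*k+1)) (p2 : ZMod 3) (x y : ZMod (2*k+1)) (i : ZMod 3) :
    (p1, p2) ∈ boseTB k x y i ↔
      (p1 = x ∧ p2 = i) ∨ (p1 = y ∧ p2 = i) ∨ (p1 = boseC k * (x+y) ∧ p2 = i+1) := by
  simp [boseTB, Prod.ext_iff]

lemma card_boseTA (x : ZMod (2*k+1)) : (boseTA k x).card = 3 := by
  refine Finset.card_eq_three.mpr ⟨(x,0),(x,1),(x,2), ?_, ?_, ?_, rfl⟩ <;>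
    simp [Prod.ext_iff] <;> decide

lemma card_boseTB (x y : ZMod (2*k+1)) (i : ZMod 3) (hxy : x ≠ y) :
    (boseTB k x y i).card = 3 := by
  have hlvl : ∀ j : ZMod 3, ¬ j = j + 1 := by decide
  refine Finset.card_eq_three.mpr ⟨(x,i),(y,i),(boseC k * (x+y), i+1), ?_, ?_, ?_, rfl⟩ <;>
    simp [Prod.ext_iff, hxy, hlvl i]

lemma boseTB_comm (x y : ZMod (2*k+1)) (i : ZMod 3) : boseTB k x y i = boseTB k y x i := by
  ext ⟨p1, p2⟩
  rw [mem_boseTB, mem_boseTB, add_comm x y]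
  tauto

def boseP (T : Finset (ZMod (2*k+1) × ZMod 3)) : Prop :=
  (∃ x, T = boseTA k x) ∨ (∃ x y i, x ≠ y ∧ T = boseTB k x y i)

lemma bose_pair (a b : ZMod (2*k+1) × ZMod 3) (hab : a ≠ b)
    (hlv : a.2 = b.2 ∨ b.2 = a.2 + 1) :
    ∃! T, boseP k T ∧ a ∈ T ∧ b ∈ T := by
  obtain ⟨a1, a2⟩ := a
  obtain ⟨b1, b2⟩ := b
  simp only at hlv
  have hc := boseC_spec k
  have h31 : (1 : ZMod 3) ≠ 0 := by decide
  have h32 : (2 : ZMod 3) ≠ 0 := by decide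
  have hdbl : ∀ u v : ZMod (2*k+1), 2*u = 2*v → u = v := by
    intro u v h
    linear_combination boseC k * h - (u - v) * hc
  have hsolve : ∀ x y w : ZMod (2*k+1), boseC k * (x + y) = w → y = 2*w - x := by
    intro x y w h
    linear_combination 2*h - (x+y)*hc
  rcases hlv with h2 | h2
  · -- same level
    subst h2
    have h1 : a1 ≠ b1 := fun h => hab (by rw [h])
    refine ⟨boseTB k a1 b1 a2, ⟨Or.inr ⟨a1, b1, a2, h1, rfl⟩, ?_, ?_⟩, ?_⟩
    · rw [mem_boseTB]; left; exact ⟨rfl, rfl⟩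
    · rw [mem_boseTB]; right; left; exact ⟨rfl, rfl⟩
    · rintro T' ⟨hP, ha, hb⟩
      rcases hP with ⟨z, rfl⟩ | ⟨x, y, i, hxy, rfl⟩
      · rw [mem_boseTA] at ha hb
        exact absurd (ha.trans hb.symm) h1
      · rw [mem_boseTB] at ha hb
        rcases ha with ⟨rfl, rfl⟩ | ⟨rfl, rfl⟩ | ⟨hq, rfl⟩
        · rcases hb with ⟨h, -⟩ | ⟨rfl, -⟩ | ⟨-, h⟩
          · exact absurd h.symm h1
          · rfl
          · exact absurd (by linear_combination - h : (1:ZMod 3) = 0) h31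
        · rcases hb with ⟨rfl, -⟩ | ⟨h, -⟩ | ⟨-, h⟩
          · exact boseTB_comm k _ _ _
          · exact absurd h.symm h1
          · exact absurd (by linear_combination - h : (1:ZMod 3) = 0) h31
        · rcases hb with ⟨-, h⟩ | ⟨-, h⟩ | ⟨h, -⟩
          · exact absurd (by linear_combination h : (1:ZMod 3) = 0) h31
          · exact absurd (by linear_combination h : (1:ZMod 3) = 0) h31
          · exact absurd (hq.trans h.symm) h1
  · -- b level = a level + 1
    subst h2
    by_cases he : b1 = a1
    · -- type A triple
      subst he
      refine ⟨boseTA k b1, ⟨Or.inl ⟨b1, rfl⟩, ?_, ?_⟩, ?_⟩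
      · rw [mem_boseTA]
      · rw [mem_boseTA]
      · rintro T' ⟨hP, ha, hb⟩
        rcases hP with ⟨z, rfl⟩ | ⟨x, y, i, hxy, rfl⟩
        · rw [mem_boseTA] at ha
          rw [ha]
        · exfalso
          rw [mem_boseTB] at ha hb
          rcases ha with ⟨rfl, rfl⟩ | ⟨rfl, rfl⟩ | ⟨hq, rfl⟩
          · rcases hb with ⟨-, h⟩ | ⟨-, h⟩ | ⟨hq, -⟩
            · exact h31 (by linear_combination h)
            · exact h31 (by linear_combination h)
            · -- b1 = c*(b1+y) forces y = b1
              have hy := hsolve b1 y (boseC k * (b1 + y)) rfl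
              rw [← hq] at hy
              exact hxy (by linear_combination - hy)
          · rcases hb with ⟨-, h⟩ | ⟨-, h⟩ | ⟨hq, -⟩
            · exact h31 (by linear_combination h)
            · exact h31 (by linear_combination h)
            · have hy := hsolve x b1 (boseC k * (x + b1)) rfl
              rw [← hq] at hy
              exact hxy (by linear_combination hy)
          · rcases hb with ⟨-, h⟩ | ⟨-, h⟩ | ⟨-, h⟩
            · exact h32 (by linear_combination h)
            · exact h32 (by linear_combination h)
            · exact h31 (by linear_combination h)
    · -- type B triple through (a1,a2),(b1,a2+1)
      have hqz : boseC k * (a1 + (2*b1 - a1)) = b1 := by linear_combination b1 * hc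
      have hza : a1 ≠ 2*b1 - a1 := by
        intro h
        exact he (hdbl b1 a1 (by linear_combination - h))
      refine ⟨boseTB k a1 (2*b1 - a1) a2, ⟨Or.inr ⟨a1, _, a2, hza, rfl⟩, ?_, ?_⟩, ?_⟩
      · rw [mem_boseTB]; left; exact ⟨rfl, rfl⟩
      · rw [mem_boseTB]; right; right; exact ⟨hqz.symm, rfl⟩
      · rintro T' ⟨hP, ha, hb⟩
        rcases hP with ⟨w, rfl⟩ | ⟨x, y, i, hxy, rfl⟩
        · rw [mem_boseTA] at ha hb
          exact absurd (hb.trans ha.symm) he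
        · rw [mem_boseTB] at ha hb
          rcases ha with ⟨rfl, rfl⟩ | ⟨rfl, rfl⟩ | ⟨hq, rfl⟩
          · rcases hb with ⟨-, h⟩ | ⟨-, h⟩ | ⟨hq, -⟩
            · exact absurd (by linear_combination h : (1:ZMod 3) = 0) h31
            · exact absurd (by linear_combination h : (1:ZMod 3) = 0) h31
            · rw [hsolve _ _ _ hq.symm]
          · rcases hb with ⟨-, h⟩ | ⟨-, h⟩ | ⟨hq, -⟩
            · exact absurd (by linear_combination h : (1:ZMod 3) = 0) h31
            · exact absurd (by linear_combination h : (1:ZMod 3) = 0) h31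
            · have hx2 : x = 2*b1 - a1 := hsolve a1 x b1 (by linear_combination - hq)
              rw [hx2]
              exact boseTB_comm k _ _ _
          · rcases hb with ⟨-, h⟩ | ⟨-, h⟩ | ⟨-, h⟩
            · exact absurd (by linear_combination h : (2:ZMod 3) = 0) h32
            · exact absurd (by linear_combination h : (2:ZMod 3) = 0) h32
            · exact absurd (by linear_combination h : (1:ZMod 3) = 0) h31
end Bose

theorem bose_sts (k : ℕ) : ∃ S : Finset (Finset (ZMod (2*k+1) × ZMod 3)), IsSTS S := by
  classical
  refine ⟨Finset.univ.filter (boseP k), ?_, ?_⟩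
  · intro T hT
    rw [Finset.mem_filter] at hT
    rcases hT.2 with ⟨x, rfl⟩ | ⟨x, y, i, hxy, rfl⟩
    · exact card_boseTA k x
    · exact card_boseTB k x y i hxy
  · intro a b hab
    have htri : ∀ u v : ZMod 3, u = v ∨ v = u + 1 ∨ u = v + 1 := by decide
    have conv : ∀ a b : ZMod (2*k+1) × ZMod 3,
        (∃! T, boseP k T ∧ a ∈ T ∧ b ∈ T) →
        ∃! T, T ∈ Finset.univ.filter (boseP k) ∧ a ∈ T ∧ b ∈ T := by
      rintro a b ⟨T, ⟨hP, ha, hb⟩, huniq⟩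
      refine ⟨T, ⟨Finset.mem_filter.mpr ⟨Finset.mem_univ T, hP⟩, ha, hb⟩, ?_⟩
      rintro T' ⟨hT', ha', hb'⟩
      exact huniq T' ⟨(Finset.mem_filter.mp hT').2, ha', hb'⟩
    rcases htri a.2 b.2 with h | h | h
    · exact conv a b (bose_pair k a b hab (Or.inl h))
    · exact conv a b (bose_pair k a b hab (Or.inr h))
    · obtain ⟨T, ⟨hP, hb', ha'⟩, huniq⟩ := bose_pair k b a (Ne.symm hab) (Or.inr h)
      exact conv a b ⟨T, ⟨hP, ha', hb'⟩, fun T' ⟨h1, h2, h3⟩ => huniq T' ⟨h1, h3, h2⟩⟩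

section SkolemQuasigroup
variable (k : ℕ)

/-- The half-idempotent commutative quasigroup operation's underlying bijection. -/
def skh (z : ZMod (2*k)) : ZMod (2*k) :=
  if Even z.val then ((z.val/2 : ℕ) : ZMod (2*k)) else ((z.val/2 + k : ℕ) : ZMod (2*k))

def skg (w : ZMod (2*k)) : ZMod (2*k) :=
  if w.val < k then ((2*w.val : ℕ) : ZMod (2*k)) else ((2*(w.val - k)+1 : ℕ) : ZMod (2*k))

variable (hk : 0 < k)
include hk

lemma skh_val_even (z : ZMod (2*k)) (hz : Even z.val) : (skh k z).val = z.val / 2 := by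
  haveI : NeZero (2*k) := ⟨by omega⟩
  have hlt := ZMod.val_lt z
  rw [skh, if_pos hz, ZMod.val_cast_of_lt (by omega)]

lemma skh_val_odd (z : ZMod (2*k)) (hz : ¬ Even z.val) : (skh k z).val = z.val / 2 + k := by
  haveI : NeZero (2*k) := ⟨by omega⟩
  have hlt := ZMod.val_lt z
  have hodd : z.val % 2 = 1 := Nat.not_even_iff.mp hz
  rw [skh, if_neg hz, ZMod.val_cast_of_lt (by omega)]

lemma skh_inj : Function.Injective (skh k) := by
  haveI : NeZero (2*k) := ⟨by omega⟩
  intro z1 z2 h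
  have hv := congrArg ZMod.val h
  apply ZMod.val_injective
  by_cases h1 : Even z1.val <;> by_cases h2 : Even z2.val
  · rw [skh_val_even k hk _ h1, skh_val_even k hk _ h2] at hv
    have e1 : z1.val % 2 = 0 := Nat.even_iff.mp h1
    have e2 : z2.val % 2 = 0 := Nat.even_iff.mp h2
    omega
  · rw [skh_val_even k hk _ h1, skh_val_odd k hk _ h2] at hv
    have := ZMod.val_lt z1
    omega
  · rw [skh_val_odd k hk _ h1, skh_val_even k hk _ h2] at hv
    have := ZMod.val_lt z2
    omega
  · rw [skh_val_odd k hk _ h1, skh_val_odd k hk _ h2] at hv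
    have e1 : z1.val % 2 = 1 := Nat.not_even_iff.mp h1
    have e2 : z2.val % 2 = 1 := Nat.not_even_iff.mp h2
    omega

lemma skh_skg (w : ZMod (2*k)) : skh k (skg k w) = w := by
  haveI : NeZero (2*k) := ⟨by omega⟩
  have hlt := ZMod.val_lt w
  by_cases h : w.val < k
  · rw [skg, if_pos h]
    have hv : ((2*w.val : ℕ) : ZMod (2*k)).val = 2*w.val := ZMod.val_cast_of_lt (by omega)
    rw [skh, if_pos (by rw [hv]; exact even_two_mul _), hv]
    rw [show 2*w.val/2 = w.val by omega]
    exact ZMod.natCast_rightInverse w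
  · rw [skg, if_neg h]
    have hv : ((2*(w.val - k)+1 : ℕ) : ZMod (2*k)).val = 2*(w.val - k)+1 :=
      ZMod.val_cast_of_lt (by omega)
    rw [skh, if_neg (by rw [hv]; simp [Nat.even_iff]), hv]
    rw [show (2*(w.val - k)+1)/2 + k = w.val by omega]
    exact ZMod.natCast_rightInverse w

lemma skh_diag_lt (x : ZMod (2*k)) (h : x.val < k) : skh k (x + x) = x := by
  haveI : NeZero (2*k) := ⟨by omega⟩
  have hv : (x + x).val = 2 * x.val := by
    rw [ZMod.val_add, Nat.mod_eq_of_lt (by omega)]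
    omega
  rw [skh, if_pos (by rw [hv]; exact even_two_mul _), hv,
    show 2*x.val/2 = x.val by omega]
  exact ZMod.natCast_rightInverse x

lemma skh_diag_ge (x : ZMod (2*k)) (h : k ≤ x.val) :
    skh k (x + x) = ((x.val - k : ℕ) : ZMod (2*k)) := by
  haveI : NeZero (2*k) := ⟨by omega⟩
  have hlt := ZMod.val_lt x
  have hv : (x + x).val = 2 * x.val - 2 * k := by
    rw [ZMod.val_add]
    rw [show x.val + x.val = 2*k + (2*x.val - 2*k) by omega, Nat.add_mod_left,
      Nat.mod_eq_of_lt (by omega)]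
  have he : Even ((x+x).val) := by
    rw [hv, show 2*x.val - 2*k = 2*(x.val - k) by omega]
    exact even_two_mul _
  rw [skh, if_pos he, hv]
  congr 1
  omega

end SkolemQuasigroup

section SkolemSTS
variable (k : ℕ)

def skTA (x : ZMod (2*k)) : Finset (Option (ZMod (2*k) × ZMod 3)) :=
  {some (x,0), some (x,1), some (x,2)}

def skTI (u : ZMod (2*k)) (i : ZMod 3) : Finset (Option (ZMod (2*k) × ZMod 3)) :=
  {none, some (u, i), some (skh k (u+u), i+1)}

def skTB (x y : ZMod (2*k)) (i : ZMod 3) : Finset (Option (ZMod (2*k) × ZMod 3)) :=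
  {some (x,i), some (y,i), some (skh k (x+y), i+1)}

lemma mem_skTA (p1 : ZMod (2*k)) (p2 : ZMod 3) (x : ZMod (2*k)) :
    some (p1, p2) ∈ skTA k x ↔ p1 = x := by
  have h3 : ∀ j : ZMod 3, j = 0 ∨ j = 1 ∨ j = 2 := by decide
  simp only [skTA, Finset.mem_insert, Finset.mem_singleton, Option.some.injEq, Prod.mk.injEq]
  constructor
  · rintro (⟨rfl, -⟩ | ⟨rfl, -⟩ | ⟨rfl, -⟩) <;> rfl
  · rintro rfl
    rcases h3 p2 with rfl | rfl | rfl <;> simp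

lemma none_not_mem_skTA (x : ZMod (2*k)) : (none : Option (ZMod (2*k) × ZMod 3)) ∉ skTA k x := by
  simp [skTA]

lemma mem_skTI (p1 : ZMod (2*k)) (p2 : ZMod 3) (u : ZMod (2*k)) (i : ZMod 3) :
    some (p1, p2) ∈ skTI k u i ↔ (p1 = u ∧ p2 = i) ∨ (p1 = skh k (u+u) ∧ p2 = i+1) := by
  simp [skTI, Prod.ext_iff]

lemma none_mem_skTI (u : ZMod (2*k)) (i : ZMod 3) :
    (none : Option (ZMod (2*k) × ZMod 3)) ∈ skTI k u i := by
  simp [skTI]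

lemma mem_skTB (p1 : ZMod (2*k)) (p2 : ZMod 3) (x y : ZMod (2*k)) (i : ZMod 3) :
    some (p1, p2) ∈ skTB k x y i ↔
      (p1 = x ∧ p2 = i) ∨ (p1 = y ∧ p2 = i) ∨ (p1 = skh k (x+y) ∧ p2 = i+1) := by
  simp [skTB, Prod.ext_iff]

lemma none_not_mem_skTB (x y : ZMod (2*k)) (i : ZMod 3) :
    (none : Option (ZMod (2*k) × ZMod 3)) ∉ skTB k x y i := by
  simp [skTB]

lemma card_skTA (x : ZMod (2*k)) : (skTA k x).card = 3 := by
  refine Finset.card_eq_three.mpr ⟨_, _, _, ?_, ?_, ?_, rfl⟩ <;> simp [Prod.ext_iff] <;> decide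

lemma card_skTI (u : ZMod (2*k)) (i : ZMod 3) : (skTI k u i).card = 3 := by
  have hlvl : ∀ j : ZMod 3, ¬ j = j + 1 := by decide
  refine Finset.card_eq_three.mpr ⟨_, _, _, ?_, ?_, ?_, rfl⟩ <;>
    simp [Prod.ext_iff, hlvl i]

lemma card_skTB (x y : ZMod (2*k)) (i : ZMod 3) (hxy : x ≠ y) : (skTB k x y i).card = 3 := by
  have hlvl : ∀ j : ZMod 3, ¬ j = j + 1 := by decide
  refine Finset.card_eq_three.mpr ⟨_, _, _, ?_, ?_, ?_, rfl⟩ <;>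
    simp [Prod.ext_iff, hxy, hlvl i]

lemma skTB_comm (x y : ZMod (2*k)) (i : ZMod 3) : skTB k x y i = skTB k y x i := by
  ext p
  cases p with
  | none => simp [none_not_mem_skTB]
  | some p =>
    obtain ⟨p1, p2⟩ := p
    rw [mem_skTB, mem_skTB, add_comm x y]
    tauto

def skP (T : Finset (Option (ZMod (2*k) × ZMod 3))) : Prop :=
  (∃ x, x.val < k ∧ T = skTA k x) ∨ (∃ u i, k ≤ u.val ∧ T = skTI k u i) ∨
    (∃ x y i, x ≠ y ∧ T = skTB k x y i)

variable (hk : 0 < k)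
include hk

lemma skdiag_inj_ge (u v : ZMod (2*k)) (hu : k ≤ u.val) (hv : k ≤ v.val)
    (h : skh k (u+u) = skh k (v+v)) : u = v := by
  haveI : NeZero (2*k) := ⟨by omega⟩
  have h1 : (skh k (u+u)).val = u.val - k := by
    have hlt := ZMod.val_lt u
    rw [skh_diag_ge k hk u hu, ZMod.val_cast_of_lt (by omega)]
  have h2 : (skh k (v+v)).val = v.val - k := by
    have hlt := ZMod.val_lt v
    rw [skh_diag_ge k hk v hv, ZMod.val_cast_of_lt (by omega)]
  apply ZMod.val_injective
  rw [h] at h1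
  omega

lemma skdiag_val_ge (u : ZMod (2*k)) (hu : k ≤ u.val) : (skh k (u+u)).val = u.val - k := by
  haveI : NeZero (2*k) := ⟨by omega⟩
  have hlt := ZMod.val_lt u
  rw [skh_diag_ge k hk u hu, ZMod.val_cast_of_lt (by omega)]

lemma skolem_pair_none (x : ZMod (2*k)) (i : ZMod 3) :
    ∃! T, skP k T ∧ (none : Option (ZMod (2*k) × ZMod 3)) ∈ T ∧ some (x, i) ∈ T := by
  haveI : NeZero (2*k) := ⟨by omega⟩
  have h3 : ∀ j : ZMod 3, j + 2 + 1 = j := by decide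
  have h3' : ∀ p q : ZMod 3, p = q + 1 → q = p + 2 := by decide
  by_cases hx : x.val < k
  · -- x below k : triple skTI (x+k) (i+2)
    set u : ZMod (2*k) := ((x.val + k : ℕ) : ZMod (2*k)) with hu
    have huval : u.val = x.val + k := ZMod.val_cast_of_lt (by have := ZMod.val_lt x; omega)
    have huge : k ≤ u.val := by omega
    have hdiag : skh k (u+u) = x := by
      rw [skh_diag_ge k hk u huge, huval, show x.val + k - k = x.val from by omega]
      exact ZMod.natCast_rightInverse x
    refine ⟨skTI k u (i+2), ⟨Or.inr (Or.inl ⟨u, i+2, huge, rfl⟩), none_mem_skTI k u _, ?_⟩, ?_⟩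
    · rw [mem_skTI]
      right
      exact ⟨hdiag.symm, (h3 i).symm⟩
    · rintro T' ⟨hP, hn, hm⟩
      rcases hP with ⟨z, hz, rfl⟩ | ⟨u', i', hu', rfl⟩ | ⟨z, y, j, hzy, rfl⟩
      · exact absurd hn (none_not_mem_skTA k z)
      · rw [mem_skTI] at hm
        rcases hm with ⟨rfl, rfl⟩ | ⟨hxe, hie⟩
        · omega
        · have hval : x.val = u'.val - k := by rw [hxe]; exact skdiag_val_ge k hk u' hu'
          have : u' = u := by
            apply ZMod.val_injective
            omega
          subst this
          rw [h3' i i' hie]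
      · exact absurd hn (none_not_mem_skTB k z y j)
  · -- x at least k : triple skTI x i
    refine ⟨skTI k x i, ⟨Or.inr (Or.inl ⟨x, i, by omega, rfl⟩), none_mem_skTI k x i, ?_⟩, ?_⟩
    · rw [mem_skTI]; left; exact ⟨rfl, rfl⟩
    · rintro T' ⟨hP, hn, hm⟩
      rcases hP with ⟨z, hz, rfl⟩ | ⟨u', i', hu', rfl⟩ | ⟨z, y, j, hzy, rfl⟩
      · exact absurd hn (none_not_mem_skTA k z)
      · rw [mem_skTI] at hm
        rcases hm with ⟨rfl, rfl⟩ | ⟨hxe, hie⟩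
        · rfl
        · have hval : x.val = u'.val - k := by rw [hxe]; exact skdiag_val_ge k hk u' hu'
          have := ZMod.val_lt u'
          omega
      · exact absurd hn (none_not_mem_skTB k z y j)

lemma skolem_pair_some (a1 b1 : ZMod (2*k)) (a2 b2 : ZMod 3)
    (hab : (a1, a2) ≠ (b1, b2)) (hlv : a2 = b2 ∨ b2 = a2 + 1) :
    ∃! T, skP k T ∧ some (a1, a2) ∈ T ∧ some (b1, b2) ∈ T := by
  haveI : NeZero (2*k) := ⟨by omega⟩
  have h31 : (1 : ZMod 3) ≠ 0 := by decide
  have h32 : (2 : ZMod 3) ≠ 0 := by decide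
  have hinj : ∀ u v : ZMod (2*k), skh k u = skh k v → u = v := fun u v h => skh_inj k hk h
  rcases hlv with h2 | h2
  · -- same level
    subst h2
    have h1 : a1 ≠ b1 := fun h => hab (by rw [h])
    refine ⟨skTB k a1 b1 a2, ⟨Or.inr (Or.inr ⟨a1, b1, a2, h1, rfl⟩), ?_, ?_⟩, ?_⟩
    · rw [mem_skTB]; left; exact ⟨rfl, rfl⟩
    · rw [mem_skTB]; right; left; exact ⟨rfl, rfl⟩
    · rintro T' ⟨hP, ha, hb⟩
      rcases hP with ⟨z, hz, rfl⟩ | ⟨u, i, hu, rfl⟩ | ⟨x, y, i, hxy, rfl⟩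
      · rw [mem_skTA] at ha hb
        exact absurd (ha.trans hb.symm) h1
      · rw [mem_skTI] at ha hb
        rcases ha with ⟨rfl, rfl⟩ | ⟨hq, rfl⟩
        · rcases hb with ⟨h, -⟩ | ⟨-, h⟩
          · exact absurd h.symm h1
          · exact absurd (by linear_combination - h : (1:ZMod 3) = 0) h31
        · rcases hb with ⟨-, h⟩ | ⟨h, -⟩
          · exact absurd (by linear_combination h : (1:ZMod 3) = 0) h31
          · exact absurd (hq.trans h.symm) h1
      · rw [mem_skTB] at ha hb
        rcases ha with ⟨rfl, rfl⟩ | ⟨rfl, rfl⟩ | ⟨hq, rfl⟩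
        · rcases hb with ⟨h, -⟩ | ⟨rfl, -⟩ | ⟨-, h⟩
          · exact absurd h.symm h1
          · rfl
          · exact absurd (by linear_combination - h : (1:ZMod 3) = 0) h31
        · rcases hb with ⟨rfl, -⟩ | ⟨h, -⟩ | ⟨-, h⟩
          · exact skTB_comm k _ _ _
          · exact absurd h.symm h1
          · exact absurd (by linear_combination - h : (1:ZMod 3) = 0) h31
        · rcases hb with ⟨-, h⟩ | ⟨-, h⟩ | ⟨h, -⟩
          · exact absurd (by linear_combination h : (1:ZMod 3) = 0) h31
          · exact absurd (by linear_combination h : (1:ZMod 3) = 0) h31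
          · exact absurd (hq.trans h.symm) h1
  · -- level + 1
    subst h2
    by_cases hd : b1 = skh k (a1 + a1)
    · by_cases ha1 : a1.val < k
      · -- b1 = a1, type A triple
        have hda : skh k (a1 + a1) = a1 := skh_diag_lt k hk a1 ha1
        have hba : b1 = a1 := by rw [hd, hda]
        subst hba
        refine ⟨skTA k b1, ⟨Or.inl ⟨b1, ha1, rfl⟩, ?_, ?_⟩, ?_⟩
        · rw [mem_skTA]
        · rw [mem_skTA]
        · rintro T' ⟨hP, ha, hb⟩
          rcases hP with ⟨z, hz, rfl⟩ | ⟨u, i, hu, rfl⟩ | ⟨x, y, i, hxy, rfl⟩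
          · rw [mem_skTA] at ha
            rw [ha]
          · exfalso
            rw [mem_skTI] at ha hb
            rcases ha with ⟨rfl, rfl⟩ | ⟨hq, rfl⟩
            · rcases hb with ⟨-, h⟩ | ⟨hq, -⟩
              · exact h31 (by linear_combination h)
              · -- b1 = u and b1 = skh (u+u), u.val ≥ k
                have := skdiag_val_ge k hk b1 hu
                rw [← hq] at this
                omega
            · rcases hb with ⟨-, h⟩ | ⟨-, h⟩
              · exact h32 (by linear_combination h)
              · exact h31 (by linear_combination h)
          · exfalso
            rw [mem_skTB] at ha hb
            rcases ha with ⟨rfl, rfl⟩ | ⟨rfl, rfl⟩ | ⟨hq, rfl⟩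
            · rcases hb with ⟨-, h⟩ | ⟨-, h⟩ | ⟨hq, -⟩
              · exact h31 (by linear_combination h)
              · exact h31 (by linear_combination h)
              · -- skh (b1 + y) = b1 = skh (b1 + b1)
                apply hxy
                have : b1 + y = b1 + b1 := hinj _ _ (by rw [← hq]; exact hd)
                exact (add_left_cancel this).symm
            · rcases hb with ⟨-, h⟩ | ⟨-, h⟩ | ⟨hq, -⟩
              · exact h31 (by linear_combination h)
              · exact h31 (by linear_combination h)
              · apply hxy
                have : x + b1 = b1 + b1 := hinj _ _ (by rw [← hq]; exact hd)
                have := this.trans (add_comm b1 b1)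
                exact (add_right_cancel this)
            · rcases hb with ⟨-, h⟩ | ⟨-, h⟩ | ⟨-, h⟩
              · exact h32 (by linear_combination h)
              · exact h32 (by linear_combination h)
              · exact h31 (by linear_combination h)
      · -- a1.val ≥ k : type I triple
        refine ⟨skTI k a1 a2, ⟨Or.inr (Or.inl ⟨a1, a2, by omega, rfl⟩), ?_, ?_⟩, ?_⟩
        · rw [mem_skTI]; left; exact ⟨rfl, rfl⟩
        · rw [mem_skTI]; right; exact ⟨hd, rfl⟩
        · rintro T' ⟨hP, ha, hb⟩
          rcases hP with ⟨z, hz, rfl⟩ | ⟨u, i, hu, rfl⟩ | ⟨x, y, i, hxy, rfl⟩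
          · rw [mem_skTA] at ha
            rw [ha] at ha1
            omega
          · rw [mem_skTI] at ha hb
            rcases ha with ⟨rfl, rfl⟩ | ⟨hq, rfl⟩
            · rfl
            · exfalso
              have := skdiag_val_ge k hk u hu
              have hlt := ZMod.val_lt u
              rw [← hq] at this
              omega
          · exfalso
            rw [mem_skTB] at ha hb
            rcases ha with ⟨rfl, rfl⟩ | ⟨rfl, rfl⟩ | ⟨hq, rfl⟩
            · rcases hb with ⟨-, h⟩ | ⟨-, h⟩ | ⟨hq, -⟩
              · exact h31 (by linear_combination h)
              · exact h31 (by linear_combination h)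
              · apply hxy
                have : a1 + y = a1 + a1 := hinj _ _ (by rw [← hq]; exact hd)
                exact (add_left_cancel this).symm
            · rcases hb with ⟨-, h⟩ | ⟨-, h⟩ | ⟨hq, -⟩
              · exact h31 (by linear_combination h)
              · exact h31 (by linear_combination h)
              · apply hxy
                have : x + a1 = a1 + a1 := hinj _ _ (by rw [← hq]; exact hd)
                have := this.trans (add_comm a1 a1)
                exact (add_right_cancel this)
            · rcases hb with ⟨-, h⟩ | ⟨-, h⟩ | ⟨-, h⟩
              · exact h32 (by linear_combination h)
              · exact h32 (by linear_combination h)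
              · exact h31 (by linear_combination h)
    · -- b1 off the diagonal : type B triple
      have hz0 : a1 + (skg k b1 - a1) = skg k b1 := by ring
      have hzq : skh k (a1 + (skg k b1 - a1)) = b1 := by rw [hz0, skh_skg k hk]
      have hza : a1 ≠ skg k b1 - a1 := by
        intro h
        apply hd
        rw [← hzq, ← h]
      refine ⟨skTB k a1 (skg k b1 - a1) a2,
        ⟨Or.inr (Or.inr ⟨a1, _, a2, hza, rfl⟩), ?_, ?_⟩, ?_⟩
      · rw [mem_skTB]; left; exact ⟨rfl, rfl⟩
      · rw [mem_skTB]; right; right; exact ⟨hzq.symm, rfl⟩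
      · rintro T' ⟨hP, ha, hb⟩
        rcases hP with ⟨z, hz, rfl⟩ | ⟨u, i, hu, rfl⟩ | ⟨x, y, i, hxy, rfl⟩
        · exfalso
          rw [mem_skTA] at ha hb
          apply hd
          rw [hb, ← ha, skh_diag_lt k hk a1 (by rw [ha]; exact hz)]
        · exfalso
          rw [mem_skTI] at ha hb
          rcases ha with ⟨rfl, rfl⟩ | ⟨hq, rfl⟩
          · rcases hb with ⟨-, h⟩ | ⟨hq, -⟩
            · exact h31 (by linear_combination h)
            · exact hd hq
          · rcases hb with ⟨-, h⟩ | ⟨-, h⟩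
            · exact h32 (by linear_combination h)
            · exact h31 (by linear_combination h)
        · rw [mem_skTB] at ha hb
          rcases ha with ⟨rfl, rfl⟩ | ⟨rfl, rfl⟩ | ⟨hq, rfl⟩
          · rcases hb with ⟨-, h⟩ | ⟨-, h⟩ | ⟨hq, -⟩
            · exact absurd (by linear_combination h : (1:ZMod 3) = 0) h31
            · exact absurd (by linear_combination h : (1:ZMod 3) = 0) h31
            · have : y = skg k b1 - a1 := by
                have h' : a1 + y = a1 + (skg k b1 - a1) := hinj _ _ (by rw [hzq, ← hq])
                exact add_left_cancel h'
              rw [this]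
          · rcases hb with ⟨-, h⟩ | ⟨-, h⟩ | ⟨hq, -⟩
            · exact absurd (by linear_combination h : (1:ZMod 3) = 0) h31
            · exact absurd (by linear_combination h : (1:ZMod 3) = 0) h31
            · have : x = skg k b1 - a1 := by
                have h' : x + a1 = a1 + (skg k b1 - a1) := hinj _ _ (by rw [hzq, ← hq])
                have h'' := h'.symm.trans (add_comm x a1)
                exact (add_left_cancel h''.symm)
              rw [this]
              exact skTB_comm k _ _ _
          · rcases hb with ⟨-, h⟩ | ⟨-, h⟩ | ⟨-, h⟩
            · exact absurd (by linear_combination h : (2:ZMod 3) = 0) h32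
            · exact absurd (by linear_combination h : (2:ZMod 3) = 0) h32
            · exact absurd (by linear_combination h : (1:ZMod 3) = 0) h31
end SkolemSTS


theorem skolem_sts (k : ℕ) (hk : 0 < k) :
    ∃ S : Finset (Finset (Option (ZMod (2*k) × ZMod 3))), IsSTS S := by
  classical
  haveI : NeZero (2*k) := ⟨by omega⟩
  refine ⟨Finset.univ.filter (skP k), ?_, ?_⟩
  · intro T hT
    rw [Finset.mem_filter] at hT
    rcases hT.2 with ⟨x, hx, rfl⟩ | ⟨u, i, hu, rfl⟩ | ⟨x, y, i, hxy, rfl⟩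
    · exact card_skTA k x
    · exact card_skTI k u i
    · exact card_skTB k x y i hxy
  · intro a b hab
    have conv : ∀ a b : Option (ZMod (2*k) × ZMod 3),
        (∃! T, skP k T ∧ a ∈ T ∧ b ∈ T) →
        ∃! T, T ∈ Finset.univ.filter (skP k) ∧ a ∈ T ∧ b ∈ T := by
      rintro a b ⟨T, ⟨hP, ha, hb⟩, huniq⟩
      refine ⟨T, ⟨Finset.mem_filter.mpr ⟨Finset.mem_univ T, hP⟩, ha, hb⟩, ?_⟩
      rintro T' ⟨hT', ha', hb'⟩
      exact huniq T' ⟨(Finset.mem_filter.mp hT').2, ha', hb'⟩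
    have swap : ∀ a b : Option (ZMod (2*k) × ZMod 3),
        (∃! T, skP k T ∧ a ∈ T ∧ b ∈ T) → (∃! T, skP k T ∧ b ∈ T ∧ a ∈ T) := by
      rintro a b ⟨T, ⟨hP, ha, hb⟩, huniq⟩
      exact ⟨T, ⟨hP, hb, ha⟩, fun T' ⟨h1, h2, h3⟩ => huniq T' ⟨h1, h3, h2⟩⟩
    have htri : ∀ u v : ZMod 3, u = v ∨ v = u + 1 ∨ u = v + 1 := by decide
    match a, b with
    | none, none => exact absurd rfl hab
    | none, some (x, i) => exact conv _ _ (skolem_pair_none k hk x i)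
    | some (x, i), none => exact conv _ _ (swap _ _ (skolem_pair_none k hk x i))
    | some (a1, a2), some (b1, b2) =>
      have hab' : (a1, a2) ≠ (b1, b2) := fun h => hab (by rw [h])
      rcases htri a2 b2 with h | h | h
      · exact conv _ _ (skolem_pair_some k hk a1 b1 a2 b2 hab' (Or.inl h))
      · exact conv _ _ (skolem_pair_some k hk a1 b1 a2 b2 hab' (Or.inr h))
      · exact conv _ _ (swap _ _
          (skolem_pair_some k hk b1 a1 b2 a2 (Ne.symm hab') (Or.inr h)))

/-- For `n ≥ 3`, the `2`-skeleton of the `n`-cube `Q_n` is factored by boundaries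
of `3`-cubes if and only if `n ≡ 1` or `3 (mod 6)`, i.e. exactly when a Steiner
triple system on `n` points exists. -/
theorem cube_two_skeleton_factorization (n : ℕ) (hn : 3 ≤ n) :
    (∃ C : Finset (Fin n → Option Bool),
      (∀ g ∈ C, IsCubeFace n 3 g) ∧
      ∀ f : Fin n → Option Bool, IsCubeFace n 2 f → ∃! g, g ∈ C ∧ FaceContained f g) ↔
      (n % 6 = 1 ∨ n % 6 = 3) := by
  constructor
  · intro h
    exact sts_mod n (by omega) (fact_to_sts h)
  · intro h
    have hsts : ∃ S : Finset (Finset (Fin n)), IsSTS S := by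
      rcases h with h1 | h3
      · -- Skolem case : n = 6k+1
        obtain ⟨k, rfl⟩ : ∃ k, n = 6*k+1 := ⟨n/6, by omega⟩
        have hk : 0 < k := by omega
        haveI : NeZero (2*k) := ⟨by omega⟩
        have e : Option (ZMod (2*k) × ZMod 3) ≃ Fin (6*k+1) :=
          Fintype.equivFinOfCardEq (by
            simp [Fintype.card_option, Fintype.card_prod, ZMod.card, Fintype.card_fin]
            omega)
        exact sts_transport e (skolem_sts k hk)
      · -- Bose case : n = 6k+3
        obtain ⟨k, rfl⟩ : ∃ k, n = 6*k+3 := ⟨(n-3)/6, by omega⟩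
        have e : (ZMod (2*k+1) × ZMod 3) ≃ Fin (6*k+3) :=
          Fintype.equivFinOfCardEq (by
            simp [Fintype.card_prod, ZMod.card, Fintype.card_fin]
            omega)
        exact sts_transport e (bose_sts k)
    obtain ⟨S, hS⟩ := hsts
    exact sts_to_fact S hS
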